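/- arXiv:1204.0540 — 4 statements merged into one kernel-verified Lean document; each statement's English description precedes it below -/
import Mathlib

section
/- Let c ≥ 0 and let f : ℝ × ℕ → ℝ be such that for every ℓ ≥ 1 the map x ↦ f(x,ℓ) is twice continuously differentiable on a neighborhood of [0,1], and suppose there is a constant C such that |f(x,ℓ)| ≤ C, |∂_x f(x,ℓ)| ≤ C and |∂_{xx} f(x,ℓ)| ≤ C for all x ∈ [0,1] and all ℓ ≥ 1. Define the kernel action K̂f(x) = Σ_{ℓ=1}^∞ (1-x)^{ℓ-1} x f(x,ℓ) and the operator Ĝf(x,ℓ) = (c/2) x(1-x) ∂_{xx} f(x,ℓ) + c[(1-x) - (ℓ-1)x] ∂_x f(x,ℓ) + c (ℓ(ℓ-1)/2) (f(x,ℓ+1) - f(x,ℓ)). Then for every x ∈ (0,1) the function K̂f is twice differentiable at x and the intertwining relation Σ_{ℓ=1}^∞ (1-x)^{ℓ-1} x Ĝf(x,ℓ) = (c/2) x(1-x) (K̂f)''(x) holds; that is, K̂Ĝf(x) = G K̂f(x) where G g(x) = (c/2) x(1-x) g''(x) is the Wright–Fisher generator. -/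
open MeasureTheory Set Filter

/-- The kernel action `K̂f(x) = Σ_{ℓ=1}^∞ (1-x)^{ℓ-1} x f(x,ℓ)`, where `f ℓ x = f(x,ℓ)`. -/
noncomputable def hatK (f : ℕ → ℝ → ℝ) (x : ℝ) : ℝ :=
  ∑' ℓ : ℕ, (1 - x) ^ ℓ * x * f (ℓ + 1) x

/-- The operator `Ĝf(x,ℓ) = (c/2) x(1-x) ∂ₓₓ f(x,ℓ) + c[(1-x)-(ℓ-1)x] ∂ₓ f(x,ℓ)
    + c (ℓ(ℓ-1)/2)(f(x,ℓ+1) - f(x,ℓ))`. -/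
noncomputable def hatG (c : ℝ) (f : ℕ → ℝ → ℝ) (x : ℝ) (ℓ : ℕ) : ℝ :=
  c / 2 * (x * (1 - x)) * deriv (deriv (f ℓ)) x
    + c * ((1 - x) - ((ℓ : ℝ) - 1) * x) * deriv (f ℓ) x
    + c * ((ℓ : ℝ) * ((ℓ : ℝ) - 1) / 2) * (f (ℓ + 1) x - f ℓ x)

noncomputable def wfG0 (f : ℕ → ℝ → ℝ) (ℓ : ℕ) (y : ℝ) : ℝ :=
  (1 - y) ^ ℓ * y * f (ℓ + 1) y

noncomputable def wfG1 (f : ℕ → ℝ → ℝ) (ℓ : ℕ) (y : ℝ) : ℝ :=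
  -(ℓ : ℝ) * (1 - y) ^ (ℓ - 1) * (y * f (ℓ + 1) y)
    + (1 - y) ^ ℓ * (f (ℓ + 1) y + y * deriv (f (ℓ + 1)) y)

noncomputable def wfG2 (f : ℕ → ℝ → ℝ) (ℓ : ℕ) (y : ℝ) : ℝ :=
  (ℓ : ℝ) * ((ℓ - 1 : ℕ) : ℝ) * (1 - y) ^ (ℓ - 2) * (y * f (ℓ + 1) y)
    - 2 * (ℓ : ℝ) * (1 - y) ^ (ℓ - 1) * (f (ℓ + 1) y + y * deriv (f (ℓ + 1)) y)
    + (1 - y) ^ ℓ * (2 * deriv (f (ℓ + 1)) y + y * deriv (deriv (f (ℓ + 1))) y)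

lemma wfG0_hasDerivAt (f : ℕ → ℝ → ℝ) (ℓ : ℕ) (y : ℝ)
    (hF : HasDerivAt (f (ℓ + 1)) (deriv (f (ℓ + 1)) y) y) :
    HasDerivAt (wfG0 f ℓ) (wfG1 f ℓ y) y := by
  have h1 : HasDerivAt (fun z : ℝ => (1 - z) ^ ℓ)
      ((ℓ : ℝ) * (1 - y) ^ (ℓ - 1) * (0 - 1)) y :=
    ((hasDerivAt_const y (1 : ℝ)).sub (hasDerivAt_id y)).pow ℓ
  have h2 : HasDerivAt (fun z : ℝ => z * f (ℓ + 1) z)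
      (1 * f (ℓ + 1) y + y * deriv (f (ℓ + 1)) y) y := (hasDerivAt_id y).mul hF
  have h3 : HasDerivAt (fun z : ℝ => (1 - z) ^ ℓ * (z * f (ℓ + 1) z)) _ y := h1.mul h2
  have hfun : (fun z : ℝ => (1 - z) ^ ℓ * (z * f (ℓ + 1) z)) = wfG0 f ℓ := by
    funext z; simp only [wfG0]; ring
  rw [hfun] at h3
  convert h3 using 1
  simp only [wfG1]; ring

lemma wfG1_hasDerivAt (f : ℕ → ℝ → ℝ) (ℓ : ℕ) (y : ℝ)
    (hF : HasDerivAt (f (ℓ + 1)) (deriv (f (ℓ + 1)) y) y)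
    (hF' : HasDerivAt (deriv (f (ℓ + 1))) (deriv (deriv (f (ℓ + 1))) y) y) :
    HasDerivAt (wfG1 f ℓ) (wfG2 f ℓ y) y := by
  have h1 : HasDerivAt (fun z : ℝ => (1 - z) ^ (ℓ - 1))
      (((ℓ - 1 : ℕ) : ℝ) * (1 - y) ^ (ℓ - 1 - 1) * (0 - 1)) y :=
    ((hasDerivAt_const y (1 : ℝ)).sub (hasDerivAt_id y)).pow (ℓ - 1)
  have h2 : HasDerivAt (fun z : ℝ => z * f (ℓ + 1) z)
      (1 * f (ℓ + 1) y + y * deriv (f (ℓ + 1)) y) y := (hasDerivAt_id y).mul hF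
  have h3 : HasDerivAt (fun z : ℝ => (1 - z) ^ ℓ)
      ((ℓ : ℝ) * (1 - y) ^ (ℓ - 1) * (0 - 1)) y :=
    ((hasDerivAt_const y (1 : ℝ)).sub (hasDerivAt_id y)).pow ℓ
  have h4 : HasDerivAt (fun z : ℝ => f (ℓ + 1) z + z * deriv (f (ℓ + 1)) z)
      (deriv (f (ℓ + 1)) y + (1 * deriv (f (ℓ + 1)) y + y * deriv (deriv (f (ℓ + 1))) y)) y :=
    hF.add ((hasDerivAt_id y).mul hF')
  have h5 : HasDerivAt (fun z : ℝ => -(ℓ : ℝ) * ((1 - z) ^ (ℓ - 1) * (z * f (ℓ + 1) z))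
      + (1 - z) ^ ℓ * (f (ℓ + 1) z + z * deriv (f (ℓ + 1)) z)) _ y := ((h1.mul h2).const_mul (-(ℓ : ℝ))).add (h3.mul h4)
  have hfun : (fun z : ℝ => -(ℓ : ℝ) * ((1 - z) ^ (ℓ - 1) * (z * f (ℓ + 1) z))
      + (1 - z) ^ ℓ * (f (ℓ + 1) z + z * deriv (f (ℓ + 1)) z)) = wfG1 f ℓ := by
    funext z; simp only [wfG1]; ring
  rw [hfun] at h5
  convert h5 using 1
  simp only [wfG2]
  rw [show ℓ - 1 - 1 = ℓ - 2 by omega]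
  ring

lemma summable_sq_geo {s : ℝ} (hs : ‖s‖ < 1) :
    Summable (fun ℓ : ℕ => ((ℓ : ℝ) + 1) ^ 2 * s ^ ℓ) := by
  have h2 := summable_pow_mul_geometric_of_norm_lt_one 2 hs
  have h1 := summable_pow_mul_geometric_of_norm_lt_one 1 hs
  have h0 := summable_geometric_of_norm_lt_one hs
  exact ((h2.add ((h1.mul_left 2).add h0)).congr fun n => by push_cast; ring)

lemma abs_mul_le' {a b A B : ℝ} (ha : |a| ≤ A) (hb : |b| ≤ B) : |a * b| ≤ A * B := by
  rw [abs_mul]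
  exact mul_le_mul ha hb (abs_nonneg b) ((abs_nonneg a).trans ha)

lemma wf_arith1 {q B : ℝ} (hq0 : 0 < q) (hq1 : q < 1) (hB1 : 1 ≤ B) (ℓ : ℕ) :
    (ℓ : ℝ) * q ^ (ℓ - 1) * (1 * B) + q ^ ℓ * (B + 1 * B)
      ≤ 3 * B * (((ℓ : ℝ) + 1) ^ 2 * q ^ ℓ) / q := by
  have hps : q ^ (ℓ - 1) * q ≤ q ^ ℓ := by
    cases ℓ with
    | zero => simpa using hq1.le
    | succ m => simp [pow_succ]
  have hP : (0:ℝ) ≤ q ^ ℓ := by positivity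
  have hn : (0:ℝ) ≤ (ℓ : ℝ) := Nat.cast_nonneg ℓ
  rw [le_div_iff₀ hq0]
  have e1 : (ℓ : ℝ) * B * (q ^ (ℓ - 1) * q) ≤ (ℓ : ℝ) * B * q ^ ℓ :=
    mul_le_mul_of_nonneg_left hps (by positivity)
  nlinarith [mul_nonneg (mul_nonneg hn (by linarith : (0:ℝ) ≤ B)) hP,
    mul_nonneg (by linarith : (0:ℝ) ≤ B) hP,
    mul_nonneg (mul_nonneg (mul_nonneg hn hn) (by linarith : (0:ℝ) ≤ B)) hP,
    mul_le_mul_of_nonneg_left hq1.le (mul_nonneg (by linarith : (0:ℝ) ≤ 2*B) hP)]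

lemma wf_arith2 {q B : ℝ} (hq0 : 0 < q) (hq1 : q < 1) (hB1 : 1 ≤ B) (ℓ : ℕ) :
    (ℓ : ℝ) * (ℓ : ℝ) * q ^ (ℓ - 2) * (1 * B)
      + 2 * (ℓ : ℝ) * q ^ (ℓ - 1) * (B + 1 * B) + q ^ ℓ * (2 * B + 1 * B)
      ≤ 8 * B * (((ℓ : ℝ) + 1) ^ 2 * q ^ ℓ) / q ^ 2 := by
  have hps : q ^ (ℓ - 1) * q ≤ q ^ ℓ := by
    cases ℓ with
    | zero => simpa using hq1.le
    | succ m => simp [pow_succ]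
  have hps2 : q ^ (ℓ - 2) * q ^ 2 ≤ q ^ ℓ := by
    match ℓ with
    | 0 => simp only [Nat.zero_sub, pow_zero, one_mul]; nlinarith
    | 1 => simp only [pow_one]; nlinarith
    | (m+2) => simp [show m + 2 - 2 = m by omega, ← pow_add]
  have hP : (0:ℝ) ≤ q ^ ℓ := by positivity
  have hn : (0:ℝ) ≤ (ℓ : ℝ) := Nat.cast_nonneg ℓ
  have hB0 : (0:ℝ) ≤ B := by linarith
  rw [le_div_iff₀ (by positivity : (0:ℝ) < q ^ 2)]
  have e1 : (ℓ : ℝ) * (ℓ : ℝ) * B * (q ^ (ℓ - 2) * q ^ 2)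
      ≤ (ℓ : ℝ) * (ℓ : ℝ) * B * q ^ ℓ :=
    mul_le_mul_of_nonneg_left hps2 (by positivity)
  have e2 : q ^ (ℓ - 1) * q * q ≤ q ^ ℓ * q :=
    mul_le_mul_of_nonneg_right hps hq0.le
  have e2' : q ^ ℓ * q ≤ q ^ ℓ := mul_le_of_le_one_right hP hq1.le
  have e3 : (4 : ℝ) * (ℓ : ℝ) * B * (q ^ (ℓ - 1) * q * q)
      ≤ 4 * (ℓ : ℝ) * B * q ^ ℓ :=
    mul_le_mul_of_nonneg_left (e2.trans e2') (by positivity)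
  have e4 : q ^ ℓ * q ^ 2 ≤ q ^ ℓ := by nlinarith
  nlinarith [mul_nonneg (mul_nonneg hn hB0) hP, mul_nonneg hB0 hP,
    mul_nonneg (mul_nonneg (mul_nonneg hn hn) hB0) hP,
    mul_le_mul_of_nonneg_left e4 (by positivity : (0:ℝ) ≤ 3 * B)]

lemma tsum_shift_trick (L h R : ℕ → ℝ) (hL : Summable L) (hh : Summable h)
    (hR : Summable R) (h0 : R 0 = L 0 - h 0)
    (hsucc : ∀ ℓ, R (ℓ + 1) = (L (ℓ + 1) - h (ℓ + 1)) + h ℓ) :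
    ∑' ℓ, R ℓ = ∑' ℓ, L ℓ := by
  have hLh : Summable (fun ℓ => L ℓ - h ℓ) := hL.sub hh
  have hLh1 : Summable (fun ℓ => L (ℓ + 1) - h (ℓ + 1)) :=
    hLh.comp_injective (add_left_injective 1)
  calc ∑' ℓ, R ℓ = R 0 + ∑' ℓ, R (ℓ + 1) := hR.tsum_eq_zero_add
    _ = (L 0 - h 0) + ∑' ℓ, ((L (ℓ + 1) - h (ℓ + 1)) + h ℓ) := by
        rw [h0]; exact congrArg _ (tsum_congr hsucc)
    _ = (L 0 - h 0) + ((∑' ℓ, (L (ℓ + 1) - h (ℓ + 1))) + ∑' ℓ, h ℓ) := by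
        rw [Summable.tsum_add hLh1 hh]
    _ = ((L 0 - h 0) + ∑' ℓ, (L (ℓ + 1) - h (ℓ + 1))) + ∑' ℓ, h ℓ := by ring
    _ = (∑' ℓ, (L ℓ - h ℓ)) + ∑' ℓ, h ℓ := by rw [← Summable.tsum_eq_zero_add hLh]
    _ = (∑' ℓ, L ℓ - ∑' ℓ, h ℓ) + ∑' ℓ, h ℓ := by rw [Summable.tsum_sub hL hh]
    _ = ∑' ℓ, L ℓ := by ring


set_option maxHeartbeats 1000000 in
/-- Intertwining relation `K̂ Ĝ f = G K̂ f` for the Wright–Fisher generator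
`G g(x) = (c/2) x (1-x) g''(x)` and the geometric kernel `K̂(x,ℓ) = (1-x)^{ℓ-1} x`. -/
theorem wright_fisher_intertwining
    (c : ℝ) (hc : 0 ≤ c) (f : ℕ → ℝ → ℝ)
    (U : Set ℝ) (hU : IsOpen U) (hUI : Icc (0 : ℝ) 1 ⊆ U)
    (hf : ∀ ℓ : ℕ, 1 ≤ ℓ → ContDiffOn ℝ 2 (f ℓ) U)
    (C : ℝ)
    (hbound : ∀ x ∈ Icc (0 : ℝ) 1, ∀ ℓ : ℕ, 1 ≤ ℓ →
      |f ℓ x| ≤ C ∧ |deriv (f ℓ) x| ≤ C ∧ |deriv (deriv (f ℓ)) x| ≤ C) :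
    ∀ x ∈ Ioo (0 : ℝ) 1,
      (∀ᶠ y in nhds x, DifferentiableAt ℝ (hatK f) y) ∧
      DifferentiableAt ℝ (deriv (hatK f)) x ∧
      ∑' ℓ : ℕ, (1 - x) ^ ℓ * x * hatG c f x (ℓ + 1)
        = c / 2 * (x * (1 - x)) * deriv (deriv (hatK f)) x := by
  intro x hx
  obtain ⟨hx0, hx1⟩ := hx
  set B : ℝ := |C| + 1 with hBdef
  have hB1 : 1 ≤ B := by have := abs_nonneg C; simp only [hBdef]; linarith
  have hB0 : (0:ℝ) ≤ B := by linarith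
  have hCB : C ≤ B := (le_abs_self C).trans (by linarith)
  set q : ℝ := 1 - x / 2 with hqdef
  have hq0 : 0 < q := by simp only [hqdef]; linarith
  have hq1 : q < 1 := by simp only [hqdef]; linarith
  set t : Set ℝ := Ioo (x / 2) ((1 + x) / 2) with htdef
  have hxt : x ∈ t := ⟨by linarith, by linarith⟩
  have ht01 : t ⊆ Icc (0 : ℝ) 1 := fun y hy =>
    ⟨by have := hy.1; linarith, by have := hy.2; linarith⟩
  have hyq : ∀ y ∈ t, |1 - y| ≤ q := by
    intro y hy
    rw [abs_of_nonneg (by have := hy.2; linarith)]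
    have := hy.1; simp only [hqdef]; linarith
  have hy1 : ∀ y ∈ t, |y| ≤ 1 := by
    intro y hy
    rw [abs_of_nonneg (by have := hy.1; linarith)]
    have := hy.2; linarith
  -- derivatives of f exist on t
  have hdF : ∀ (k : ℕ), ∀ y ∈ t, HasDerivAt (f (k + 1)) (deriv (f (k + 1)) y) y := by
    intro k y hy
    have hyU : U ∈ nhds y := hU.mem_nhds (hUI (ht01 hy))
    exact (((hf (k + 1) (by omega)).differentiableOn (by norm_num)).differentiableAt
      hyU).hasDerivAt
  have hdF' : ∀ (k : ℕ), ∀ y ∈ t,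
      HasDerivAt (deriv (f (k + 1))) (deriv (deriv (f (k + 1))) y) y := by
    intro k y hy
    have hyU : U ∈ nhds y := hU.mem_nhds (hUI (ht01 hy))
    have h1 : ContDiffOn ℝ 1 (deriv (f (k + 1))) U :=
      (hf (k + 1) (by omega)).deriv_of_isOpen hU (by norm_num)
    exact ((h1.differentiableOn (by norm_num)).differentiableAt hyU).hasDerivAt
  -- pointwise bounds
  have hbnd1 : ∀ (ℓ : ℕ), ∀ y ∈ t,
      ‖wfG1 f ℓ y‖ ≤ 3 * B * (((ℓ : ℝ) + 1) ^ 2 * q ^ ℓ) / q := by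
    intro ℓ y hy
    obtain ⟨hb1, hb2, hb3⟩ := hbound y (ht01 hy) (ℓ + 1) (by omega)
    have hF : |f (ℓ + 1) y| ≤ B := hb1.trans hCB
    have hF' : |deriv (f (ℓ + 1)) y| ≤ B := hb2.trans hCB
    have hyy := hy1 y hy
    have hqq := hyq y hy
    have hpow1 : |(1 - y) ^ (ℓ - 1)| ≤ q ^ (ℓ - 1) := by
      rw [abs_pow]; exact pow_le_pow_left₀ (abs_nonneg _) hqq _
    have hpow : |(1 - y) ^ ℓ| ≤ q ^ ℓ := by
      rw [abs_pow]; exact pow_le_pow_left₀ (abs_nonneg _) hqq _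
    have hyF : |y * f (ℓ + 1) y| ≤ 1 * B := abs_mul_le' hyy hF
    have hS1 : |f (ℓ + 1) y + y * deriv (f (ℓ + 1)) y| ≤ B + 1 * B :=
      (abs_add_le _ _).trans (add_le_add hF (abs_mul_le' hyy hF'))
    have hneg : |(-(ℓ : ℝ))| ≤ (ℓ : ℝ) := by simp
    have T1 : |(-(ℓ : ℝ)) * (1 - y) ^ (ℓ - 1) * (y * f (ℓ + 1) y)|
        ≤ (ℓ : ℝ) * q ^ (ℓ - 1) * (1 * B) := abs_mul_le' (abs_mul_le' hneg hpow1) hyF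
    have T2 : |(1 - y) ^ ℓ * (f (ℓ + 1) y + y * deriv (f (ℓ + 1)) y)|
        ≤ q ^ ℓ * (B + 1 * B) := abs_mul_le' hpow hS1
    rw [Real.norm_eq_abs]
    exact ((abs_add_le _ _).trans (add_le_add T1 T2)).trans (wf_arith1 hq0 hq1 hB1 ℓ)
  have hbnd2 : ∀ (ℓ : ℕ), ∀ y ∈ t,
      ‖wfG2 f ℓ y‖ ≤ 8 * B * (((ℓ : ℝ) + 1) ^ 2 * q ^ ℓ) / q ^ 2 := by
    intro ℓ y hy
    obtain ⟨hb1, hb2, hb3⟩ := hbound y (ht01 hy) (ℓ + 1) (by omega)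
    have hF : |f (ℓ + 1) y| ≤ B := hb1.trans hCB
    have hF' : |deriv (f (ℓ + 1)) y| ≤ B := hb2.trans hCB
    have hF'' : |deriv (deriv (f (ℓ + 1))) y| ≤ B := hb3.trans hCB
    have hyy := hy1 y hy
    have hqq := hyq y hy
    have hpow2 : |(1 - y) ^ (ℓ - 2)| ≤ q ^ (ℓ - 2) := by
      rw [abs_pow]; exact pow_le_pow_left₀ (abs_nonneg _) hqq _
    have hpow1 : |(1 - y) ^ (ℓ - 1)| ≤ q ^ (ℓ - 1) := by
      rw [abs_pow]; exact pow_le_pow_left₀ (abs_nonneg _) hqq _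
    have hpow : |(1 - y) ^ ℓ| ≤ q ^ ℓ := by
      rw [abs_pow]; exact pow_le_pow_left₀ (abs_nonneg _) hqq _
    have hyF : |y * f (ℓ + 1) y| ≤ 1 * B := abs_mul_le' hyy hF
    have hS1 : |f (ℓ + 1) y + y * deriv (f (ℓ + 1)) y| ≤ B + 1 * B :=
      (abs_add_le _ _).trans (add_le_add hF (abs_mul_le' hyy hF'))
    have hS2 : |2 * deriv (f (ℓ + 1)) y + y * deriv (deriv (f (ℓ + 1))) y|
        ≤ 2 * B + 1 * B := by
      refine (abs_add_le _ _).trans (add_le_add ?_ (abs_mul_le' hyy hF''))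
      rw [abs_mul]; norm_num; linarith
    have hc1 : |((ℓ - 1 : ℕ) : ℝ)| ≤ (ℓ : ℝ) := by
      rw [Nat.abs_cast]; exact_mod_cast Nat.sub_le ℓ 1
    have hcℓ : |(ℓ : ℝ)| ≤ (ℓ : ℝ) := by rw [Nat.abs_cast]
    have T1 : |(ℓ : ℝ) * ((ℓ - 1 : ℕ) : ℝ) * (1 - y) ^ (ℓ - 2) * (y * f (ℓ + 1) y)|
        ≤ (ℓ : ℝ) * (ℓ : ℝ) * q ^ (ℓ - 2) * (1 * B) :=
      abs_mul_le' (abs_mul_le' (abs_mul_le' hcℓ hc1) hpow2) hyF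
    have T2 : |2 * (ℓ : ℝ) * (1 - y) ^ (ℓ - 1)
          * (f (ℓ + 1) y + y * deriv (f (ℓ + 1)) y)|
        ≤ 2 * (ℓ : ℝ) * q ^ (ℓ - 1) * (B + 1 * B) := by
      refine abs_mul_le' (abs_mul_le' ?_ hpow1) hS1
      rw [abs_mul, Nat.abs_cast]; norm_num
    have T3 : |(1 - y) ^ ℓ * (2 * deriv (f (ℓ + 1)) y
          + y * deriv (deriv (f (ℓ + 1))) y)| ≤ q ^ ℓ * (2 * B + 1 * B) :=
      abs_mul_le' hpow hS2
    have Tneg : |-(2 * (ℓ : ℝ) * (1 - y) ^ (ℓ - 1)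
          * (f (ℓ + 1) y + y * deriv (f (ℓ + 1)) y))|
        ≤ 2 * (ℓ : ℝ) * q ^ (ℓ - 1) * (B + 1 * B) := by rw [abs_neg]; exact T2
    rw [Real.norm_eq_abs, wfG2, sub_eq_add_neg]
    exact ((abs_add_le _ _).trans (add_le_add ((abs_add_le _ _).trans
      (add_le_add T1 Tneg)) T3)).trans (wf_arith2 hq0 hq1 hB1 ℓ)
  -- summable bound functions
  have hqn : ‖q‖ < 1 := by rw [Real.norm_eq_abs, abs_of_pos hq0]; exact hq1
  have hu1 : Summable (fun ℓ : ℕ => 3 * B * (((ℓ : ℝ) + 1) ^ 2 * q ^ ℓ) / q) :=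
    ((summable_sq_geo hqn).mul_left (3 * B)).div_const q
  have hu2 : Summable (fun ℓ : ℕ => 8 * B * (((ℓ : ℝ) + 1) ^ 2 * q ^ ℓ) / q ^ 2) :=
    ((summable_sq_geo hqn).mul_left (8 * B)).div_const (q ^ 2)
  have hrn : ‖(1 - x)‖ < 1 := by
    rw [Real.norm_eq_abs, abs_of_pos (by linarith)]; linarith
  -- summability of the series at x
  have hxI : x ∈ Icc (0 : ℝ) 1 := ⟨hx0.le, hx1.le⟩
  have hg0x : Summable (fun ℓ => wfG0 f ℓ x) := by
    refine Summable.of_norm_bounded ((summable_sq_geo hrn).mul_left B) ?_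
    intro ℓ
    obtain ⟨hb1, -, -⟩ := hbound x hxI (ℓ + 1) (by omega)
    have hF : |f (ℓ + 1) x| ≤ B := hb1.trans hCB
    have hpow : |(1 - x) ^ ℓ| ≤ (1 - x) ^ ℓ := by
      rw [abs_pow, abs_of_nonneg (by linarith : (0:ℝ) ≤ 1 - x)]
    have habs : |x| ≤ 1 := by rw [abs_of_pos hx0]; linarith
    have := abs_mul_le' (abs_mul_le' hpow habs) hF
    rw [Real.norm_eq_abs, wfG0]
    refine this.trans ?_
    have hP : (0:ℝ) ≤ (1 - x) ^ ℓ := pow_nonneg (by linarith) ℓ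
    have hn : (0:ℝ) ≤ (ℓ : ℝ) := Nat.cast_nonneg ℓ
    nlinarith [mul_nonneg hB0 hP, mul_nonneg (mul_nonneg hB0 hP) hn,
      mul_nonneg (mul_nonneg (mul_nonneg hB0 hP) hn) hn]
  have hg1x : Summable (fun ℓ => wfG1 f ℓ x) :=
    Summable.of_norm_bounded hu1 (fun ℓ => hbnd1 ℓ x hxt)
  have hg2x : Summable (fun ℓ => wfG2 f ℓ x) :=
    Summable.of_norm_bounded hu2 (fun ℓ => hbnd2 ℓ x hxt)
  -- term-by-term differentiation
  have hKdef : hatK f = fun z => ∑' ℓ, wfG0 f ℓ z := rfl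
  have hK : ∀ y ∈ t, HasDerivAt (hatK f) (∑' ℓ, wfG1 f ℓ y) y := by
    intro y hy
    rw [hKdef]
    exact hasDerivAt_tsum_of_isPreconnected hu1 isOpen_Ioo isPreconnected_Ioo
      (fun n z hz => wfG0_hasDerivAt f n z (hdF n z hz)) hbnd1 hxt hg0x hy
  have hK1 : HasDerivAt (fun z => ∑' ℓ, wfG1 f ℓ z) (∑' ℓ, wfG2 f ℓ x) x :=
    hasDerivAt_tsum_of_isPreconnected hu2 isOpen_Ioo isPreconnected_Ioo
      (fun n z hz => wfG1_hasDerivAt f n z (hdF n z hz) (hdF' n z hz)) hbnd2 hxt hg1x hxt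
  have htm : t ∈ nhds x := isOpen_Ioo.mem_nhds hxt
  have heq : (fun z => ∑' ℓ, wfG1 f ℓ z) =ᶠ[nhds x] deriv (hatK f) :=
    eventually_of_mem htm (fun y hy => ((hK y hy).deriv).symm)
  have hd2val : deriv (deriv (hatK f)) x = ∑' ℓ, wfG2 f ℓ x :=
    heq.deriv_eq.symm.trans hK1.deriv
  refine ⟨eventually_of_mem htm (fun y hy => (hK y hy).differentiableAt), ?_, ?_⟩
  · exact (heq.differentiableAt_iff).mp hK1.differentiableAt
  -- the intertwining identity
  rw [hd2val, ← tsum_mul_left]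
  -- summability of the three sequences
  have hGb : ∀ ℓ : ℕ, |hatG c f x (ℓ + 1)| ≤ 3 * (|c| + 1) * B * ((ℓ : ℝ) + 1) ^ 2 := by
    intro ℓ
    obtain ⟨hb1, hb2, hb3⟩ := hbound x hxI (ℓ + 1) (by omega)
    obtain ⟨hb4, -, -⟩ := hbound x hxI (ℓ + 2) (by omega)
    have hF : |f (ℓ + 1) x| ≤ B := hb1.trans hCB
    have hF' : |deriv (f (ℓ + 1)) x| ≤ B := hb2.trans hCB
    have hF'' : |deriv (deriv (f (ℓ + 1))) x| ≤ B := hb3.trans hCB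
    have hF2 : |f (ℓ + 2) x| ≤ B := hb4.trans hCB
    have hxx : |x * (1 - x)| ≤ 1 := by
      rw [abs_of_nonneg (by nlinarith)]; nlinarith
    have hc2 : |c / 2| ≤ |c| / 2 := le_of_eq (by rw [abs_div]; norm_num)
    have t1 : |c / 2 * (x * (1 - x)) * deriv (deriv (f (ℓ + 1))) x|
        ≤ |c| / 2 * 1 * B := abs_mul_le' (abs_mul_le' hc2 hxx) hF''
    have hW : |(1 - x) - (((ℓ + 1 : ℕ) : ℝ) - 1) * x| ≤ 1 + (ℓ : ℝ) := by
      have e : ((ℓ + 1 : ℕ) : ℝ) - 1 = (ℓ : ℝ) := by push_cast; ring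
      rw [e]
      have h1 : |1 - x| ≤ 1 := by rw [abs_of_nonneg (by linarith)]; linarith
      have h2 : |(ℓ : ℝ) * x| ≤ (ℓ : ℝ) := by
        rw [abs_mul, Nat.abs_cast, abs_of_pos hx0]
        nlinarith [Nat.cast_nonneg (α := ℝ) ℓ]
      exact (abs_sub _ _).trans (add_le_add h1 h2)
    have t2 : |c * ((1 - x) - (((ℓ + 1 : ℕ) : ℝ) - 1) * x) * deriv (f (ℓ + 1)) x|
        ≤ |c| * (1 + (ℓ : ℝ)) * B := abs_mul_le' (abs_mul_le' le_rfl hW) hF'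
    have hcoef : |((ℓ + 1 : ℕ) : ℝ) * (((ℓ + 1 : ℕ) : ℝ) - 1) / 2|
        ≤ ((ℓ : ℝ) + 1) * (ℓ : ℝ) / 2 := by
      have e : ((ℓ + 1 : ℕ) : ℝ) * (((ℓ + 1 : ℕ) : ℝ) - 1) / 2
          = ((ℓ : ℝ) + 1) * (ℓ : ℝ) / 2 := by push_cast; ring
      rw [e, abs_of_nonneg (by positivity)]
    have t3 : |c * (((ℓ + 1 : ℕ) : ℝ) * (((ℓ + 1 : ℕ) : ℝ) - 1) / 2)
          * (f (ℓ + 2) x - f (ℓ + 1) x)|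
        ≤ |c| * (((ℓ : ℝ) + 1) * (ℓ : ℝ) / 2) * (B + B) :=
      abs_mul_le' (abs_mul_le' le_rfl hcoef) ((abs_sub _ _).trans (add_le_add hF2 hF))
    have tri : |hatG c f x (ℓ + 1)|
        ≤ |c / 2 * (x * (1 - x)) * deriv (deriv (f (ℓ + 1))) x|
          + |c * ((1 - x) - (((ℓ + 1 : ℕ) : ℝ) - 1) * x) * deriv (f (ℓ + 1)) x|
          + |c * (((ℓ + 1 : ℕ) : ℝ) * (((ℓ + 1 : ℕ) : ℝ) - 1) / 2)
              * (f (ℓ + 2) x - f (ℓ + 1) x)| := by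
      rw [hatG]
      exact (abs_add_le _ _).trans (add_le_add_left (abs_add_le _ _) _)
    have hcc : |c| ≤ |c| + 1 := by linarith
    have hn : (0:ℝ) ≤ (ℓ : ℝ) := Nat.cast_nonneg ℓ
    have hB0 : (0:ℝ) ≤ B := by linarith
    have hc0 : (0:ℝ) ≤ |c| := abs_nonneg c
    refine (tri.trans (add_le_add (add_le_add t1 t2) t3)).trans ?_
    nlinarith [mul_nonneg (mul_nonneg hc0 hn) hB0, mul_nonneg hc0 hB0,
      mul_nonneg (mul_nonneg (mul_nonneg hc0 hn) hn) hB0,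
      mul_nonneg (mul_nonneg hn hn) hB0, mul_nonneg hn hB0]
  have hxabs : |x| ≤ 1 := by rw [abs_of_pos hx0]; linarith
  have hpowr : ∀ ℓ : ℕ, |(1 - x) ^ ℓ| ≤ (1 - x) ^ ℓ := fun ℓ => by
    rw [abs_pow, abs_of_nonneg (by linarith : (0:ℝ) ≤ 1 - x)]
  have hL : Summable (fun ℓ : ℕ => (1 - x) ^ ℓ * x * hatG c f x (ℓ + 1)) := by
    refine Summable.of_norm_bounded
      ((summable_sq_geo hrn).mul_left (3 * (|c| + 1) * B)) ?_
    intro ℓ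
    rw [Real.norm_eq_abs]
    refine (abs_mul_le' (abs_mul_le' (hpowr ℓ) hxabs) (hGb ℓ)).trans (le_of_eq ?_)
    ring
  have hsh : Summable (fun ℓ : ℕ =>
      c * ((ℓ : ℝ) + 1) * (ℓ : ℝ) / 2 * ((1 - x) ^ ℓ * x * f (ℓ + 2) x)) := by
    refine Summable.of_norm_bounded
      ((summable_sq_geo hrn).mul_left ((|c| + 1) * B)) ?_
    intro ℓ
    obtain ⟨hb4, -, -⟩ := hbound x hxI (ℓ + 2) (by omega)
    have hF2 : |f (ℓ + 2) x| ≤ B := hb4.trans hCB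
    have h1 : |c * ((ℓ : ℝ) + 1) * (ℓ : ℝ) / 2| ≤ |c| * ((ℓ : ℝ) + 1) * (ℓ : ℝ) / 2 := by
      rw [abs_div, abs_mul, abs_mul, Nat.abs_cast,
        abs_of_nonneg (a := (ℓ:ℝ) + 1) (by positivity)]
      norm_num
    have h2 : |(1 - x) ^ ℓ * x * f (ℓ + 2) x| ≤ (1 - x) ^ ℓ * 1 * B :=
      abs_mul_le' (abs_mul_le' (hpowr ℓ) hxabs) hF2
    rw [Real.norm_eq_abs]
    refine (abs_mul_le' h1 h2).trans ?_
    have hn : (0:ℝ) ≤ (ℓ : ℝ) := Nat.cast_nonneg ℓ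
    have hB0 : (0:ℝ) ≤ B := by linarith
    have hc0 : (0:ℝ) ≤ |c| := abs_nonneg c
    have hP : (0:ℝ) ≤ (1 - x) ^ ℓ := pow_nonneg (by linarith) ℓ
    nlinarith [mul_nonneg (mul_nonneg (mul_nonneg hc0 hn) hB0) hP,
      mul_nonneg (mul_nonneg hc0 hB0) hP, mul_nonneg (mul_nonneg hn hB0) hP,
      mul_nonneg (mul_nonneg (mul_nonneg hn hn) hB0) hP,
      mul_nonneg (mul_nonneg (mul_nonneg (mul_nonneg hc0 hn) hn) hB0) hP,
      mul_nonneg hB0 hP]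
  have hRs : Summable (fun ℓ : ℕ => c / 2 * (x * (1 - x)) * wfG2 f ℓ x) :=
    hg2x.mul_left _
  -- the termwise identities
  have idR0 : c / 2 * (x * (1 - x)) * wfG2 f 0 x
      = (1 - x) ^ 0 * x * hatG c f x (0 + 1)
        - c * ((0 : ℕ) + 1 : ℝ) * ((0 : ℕ) : ℝ) / 2 * ((1 - x) ^ 0 * x * f (0 + 2) x) := by
    norm_num [wfG2, hatG]
    ring
  have idRs : ∀ ℓ : ℕ, c / 2 * (x * (1 - x)) * wfG2 f (ℓ + 1) x
      = ((1 - x) ^ (ℓ + 1) * x * hatG c f x (ℓ + 1 + 1)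
          - c * (((ℓ + 1 : ℕ) : ℝ) + 1) * ((ℓ + 1 : ℕ) : ℝ) / 2
            * ((1 - x) ^ (ℓ + 1) * x * f (ℓ + 1 + 2) x))
        + c * ((ℓ : ℝ) + 1) * (ℓ : ℝ) / 2 * ((1 - x) ^ ℓ * x * f (ℓ + 2) x) := by
    intro ℓ
    match ℓ with
    | 0 =>
      norm_num [wfG2, hatG]
      ring
    | (m + 1) =>
      simp only [wfG2, hatG]
      rw [show m + 1 + 1 - 2 = m by omega, show m + 1 + 1 - 1 = m + 1 by omega]
      push_cast
      ring
  exact (tsum_shift_trick _ _ _ hL hsh hRs idR0 idRs).symm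
end

section
/- Let (Ω, 𝔽, ℙ) be a probability space, K ∈ ℕ, K ≥ 1, and let (r_j)_{j ≥ K} be a nondecreasing sequence of positive reals with r_{K+1} > r_K and Σ_{j ≥ K} 1/r_j < ∞. Let (T_j)_{j ≥ K+1} be independent random variables with T_j exponentially distributed with rate r_j. Then there exists a finite constant C such that ℙ( Σ_{j ≥ K+1} T_j > t ) ≤ C exp( -(r_K + r_{K+1}) t / 2 ) for all t ≥ 0; in particular, ℙ( Σ_{j ≥ K+1} T_j > t ) / e^{-r_K t} → 0 as t → ∞. -/
open MeasureTheory ProbabilityTheory Set Filter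
open scoped ENNReal NNReal

lemma my_integral_exp_neg_mul_Ioi {b : ℝ} (hb : 0 < b) :
    ∫ x in Ioi (0:ℝ), Real.exp (-b * x) = 1 / b := by
  have h := integral_comp_mul_left_Ioi (fun x => Real.exp (-x)) 0 hb
  simp only [mul_zero, neg_mul, integral_exp_neg_Ioi_zero, smul_eq_mul, mul_one] at h ⊢
  rw [h, one_div]

lemma my_pdfReal_eq (r x : ℝ) :
    exponentialPDFReal r x = if 0 ≤ x then r * Real.exp (-(r * x)) else 0 := by
  rw [exponentialPDFReal, gammaPDFReal]
  simp only [Real.rpow_one, Real.Gamma_one, div_one, sub_self, Real.rpow_zero, mul_one]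

lemma my_integrableOn {r l : ℝ} (hl : l < r) :
    IntegrableOn (fun x => r * Real.exp (-(r - l) * x)) (Ici (0:ℝ)) := by
  rw [integrableOn_Ici_iff_integrableOn_Ioi]
  exact (exp_neg_integrableOn_Ioi 0 (by linarith)).const_mul r

lemma my_indicator_eq {r l : ℝ} :
    (fun x => exponentialPDFReal r x * Real.exp (l * x))
      = (Ici (0:ℝ)).indicator (fun x => r * Real.exp (-(r - l) * x)) := by
  ext x
  rw [my_pdfReal_eq, Set.indicator_apply]
  simp only [mem_Ici]
  by_cases hx : 0 ≤ x
  · rw [if_pos hx, if_pos hx, mul_assoc, ← Real.exp_add]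
    ring_nf
  · rw [if_neg hx, if_neg hx, zero_mul]

lemma my_integrable_pdf_exp {r l : ℝ} (hl : l < r) :
    Integrable (fun x => exponentialPDFReal r x * Real.exp (l * x)) := by
  rw [my_indicator_eq, integrable_indicator_iff measurableSet_Ici]
  exact my_integrableOn hl

lemma my_expMeasure_eq (r : ℝ) :
    expMeasure r = volume.withDensity
      (fun x => ((exponentialPDFReal r x).toNNReal : ℝ≥0∞)) := rfl

lemma my_meas_pdf (r : ℝ) : Measurable (fun x => Real.toNNReal (exponentialPDFReal r x)) :=
  (measurable_exponentialPDFReal r).real_toNNReal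

lemma my_smul_eq {r : ℝ} (hr : 0 < r) (g : ℝ → ℝ) :
    (fun x => Real.toNNReal (exponentialPDFReal r x) • g x)
      = fun x => exponentialPDFReal r x * g x := by
  ext x
  rw [NNReal.smul_def, smul_eq_mul, Real.coe_toNNReal _ (exponentialPDFReal_nonneg hr x)]

lemma my_integral_exp_expMeasure {r l : ℝ} (hr : 0 < r) (hl : l < r) :
    ∫ x, Real.exp (l * x) ∂(expMeasure r) = r / (r - l) := by
  rw [my_expMeasure_eq,
    integral_withDensity_eq_integral_smul (my_meas_pdf r) (fun x => Real.exp (l * x)),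
    my_smul_eq hr, my_indicator_eq, integral_indicator measurableSet_Ici,
    integral_Ici_eq_integral_Ioi, integral_const_mul, my_integral_exp_neg_mul_Ioi (by linarith)]
  ring

lemma my_integrable_exp_expMeasure {r l : ℝ} (hr : 0 < r) (hl : l < r) :
    Integrable (fun x => Real.exp (l * x)) (expMeasure r) := by
  rw [my_expMeasure_eq, integrable_withDensity_iff_integrable_smul (my_meas_pdf r),
    my_smul_eq hr]
  exact my_integrable_pdf_exp hl

lemma my_ae_nonneg {Ω : Type*} [MeasurableSpace Ω] (P : Measure Ω) {r : ℝ} {X : Ω → ℝ}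
    (hX : Measurable X) (hlaw : Measure.map X P = expMeasure r) : ∀ᵐ ω ∂P, 0 ≤ X ω := by
  have h0 : P (X ⁻¹' Iio 0) = 0 := by
    rw [← Measure.map_apply hX measurableSet_Iio, hlaw,
      show expMeasure r = volume.withDensity (exponentialPDF r) from rfl,
      withDensity_apply _ measurableSet_Iio]
    exact lintegral_exponentialPDF_of_nonpos le_rfl
  rw [ae_iff]
  convert h0 using 2
  ext ω
  simp [not_le]

/-- If `(r_j)_{j ≥ K}` is nondecreasing and positive with `r_{K+1} > r_K` and
`Σ_{j ≥ K} 1/r_j < ∞`, and `(T_j)_{j ≥ K+1}` are independent exponentials with rates `r_j`, then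
`ℙ(Σ_{j ≥ K+1} T_j > t) ≤ C e^{-(r_K + r_{K+1})t/2}` for some finite constant `C`; in particular
`ℙ(Σ_{j ≥ K+1} T_j > t)/e^{-r_K t} → 0` as `t → ∞`. -/
theorem exponential_sum_tail_decay
    {Ω : Type*} [MeasurableSpace Ω] (P : Measure Ω) [IsProbabilityMeasure P]
    (K : ℕ) (hK : 1 ≤ K) (r : ℕ → ℝ) (T : ℕ → Ω → ℝ)
    (hpos : ∀ j : ℕ, K ≤ j → 0 < r j)
    (hmono : ∀ i j : ℕ, K ≤ i → i ≤ j → r i ≤ r j)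
    (hgap : r K < r (K + 1))
    (hsum : Summable (fun j : ℕ => 1 / r (K + j)))
    (hmeas : ∀ j : ℕ, K + 1 ≤ j → Measurable (T j))
    (hindep : iIndepFun (fun j : ℕ => T (K + 1 + j)) P)
    (hlaw : ∀ j : ℕ, K + 1 ≤ j → Measure.map (T j) P = expMeasure (r j)) :
    (∃ C : ℝ, 0 ≤ C ∧ ∀ t : ℝ, 0 ≤ t →
      P {ω | ENNReal.ofReal t < ∑' j : ℕ, ENNReal.ofReal (T (K + 1 + j) ω)}
        ≤ ENNReal.ofReal (C * Real.exp (-((r K + r (K + 1)) / 2) * t))) ∧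
    Tendsto
      (fun t : ℝ =>
        (P {ω | ENNReal.ofReal t < ∑' j : ℕ, ENNReal.ofReal (T (K + 1 + j) ω)}).toReal
          / Real.exp (-(r K) * t))
      atTop (nhds 0) := by
  -- notation
  set X : ℕ → Ω → ℝ := fun j => T (K + 1 + j) with hX_def
  obtain ⟨l, hl_def⟩ : ∃ x : ℝ, x = (r K + r (K + 1)) / 2 := ⟨_, rfl⟩
  have hrK : 0 < r K := hpos K le_rfl
  have hl_pos : 0 < l := by
    have := hpos (K + 1) (by omega)
    rw [hl_def]; linarith
  have hl_lt : ∀ j : ℕ, l < r (K + 1 + j) := fun j => by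
    have h1 : r (K + 1) ≤ r (K + 1 + j) := hmono (K + 1) (K + 1 + j) (by omega) (by omega)
    rw [hl_def]; linarith
  have hrj_pos : ∀ j : ℕ, 0 < r (K + 1 + j) := fun j => hpos _ (by omega)
  have hXmeas : ∀ j : ℕ, Measurable (X j) := fun j => hmeas _ (by omega)
  have hXlaw : ∀ j : ℕ, Measure.map (X j) P = expMeasure (r (K + 1 + j)) :=
    fun j => hlaw _ (by omega)
  -- moment generating functions
  have hgmeas : ∀ μ : Measure ℝ, AEStronglyMeasurable (fun x : ℝ => Real.exp (l * x)) μ :=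
    fun μ => (Real.measurable_exp.comp (measurable_id.const_mul l)).aestronglyMeasurable
  have hint : ∀ j : ℕ, Integrable (fun ω => Real.exp (l * X j ω)) P := by
    intro j
    have h0 : Integrable (fun x : ℝ => Real.exp (l * x)) (Measure.map (X j) P) := by
      rw [hXlaw j]; exact my_integrable_exp_expMeasure (hrj_pos j) (hl_lt j)
    exact (integrable_map_measure (hgmeas _) (hXmeas j).aemeasurable).mp h0
  have hmgf : ∀ j : ℕ, mgf (X j) P l = r (K + 1 + j) / (r (K + 1 + j) - l) := by
    intro j
    have h : ∫ x, Real.exp (l * x) ∂(Measure.map (X j) P)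
        = ∫ ω, Real.exp (l * X j ω) ∂P :=
      integral_map (hXmeas j).aemeasurable (hgmeas _)
    have h2 : mgf (X j) P l = ∫ ω, Real.exp (l * X j ω) ∂P := rfl
    rw [h2, ← h, hXlaw j, my_integral_exp_expMeasure (hrj_pos j) (hl_lt j)]
  -- uniform bound on the products of mgfs
  have hsum' : Summable (fun j : ℕ => 1 / r (K + 1 + j)) := by
    have h := (summable_nat_add_iff 1).mpr hsum
    refine h.congr fun n => ?_
    congr 2
    omega
  obtain ⟨c, hc_def⟩ : ∃ x : ℝ, x = l * r (K + 1) / (r (K + 1) - l) := ⟨_, rfl⟩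
  have hrK1_l : 0 < r (K + 1) - l := by
    have := hl_lt 0
    simpa using this
  have hc_nonneg : 0 ≤ c := by
    rw [hc_def]
    apply div_nonneg _ hrK1_l.le
    have := hpos (K + 1) (by omega)
    positivity
  obtain ⟨B, hB_def⟩ : ∃ x : ℝ, x = ∑' j : ℕ, 1 / r (K + 1 + j) := ⟨_, rfl⟩
  obtain ⟨C, hC_def⟩ : ∃ x : ℝ, x = Real.exp (c * B) := ⟨_, rfl⟩
  have hC_nonneg : 0 ≤ C := hC_def ▸ (Real.exp_pos _).le
  have hprod : ∀ n : ℕ,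
      ∏ j ∈ Finset.range n, (r (K + 1 + j) / (r (K + 1 + j) - l)) ≤ C := by
    intro n
    have hterm : ∀ j ∈ Finset.range n,
        r (K + 1 + j) / (r (K + 1 + j) - l) ≤ Real.exp (c * (1 / r (K + 1 + j))) := by
      intro j _
      have hjl : 0 < r (K + 1 + j) - l := by have := hl_lt j; linarith
      have h1 : r (K + 1 + j) / (r (K + 1 + j) - l) = l / (r (K + 1 + j) - l) + 1 := by
        field_simp
        ring
      have h2 : l / (r (K + 1 + j) - l) ≤ c * (1 / r (K + 1 + j)) := by
        have hK1j : r (K + 1) ≤ r (K + 1 + j) := hmono _ _ (by omega) (by omega)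
        have hc_eq : c * (r (K + 1) - l) = l * r (K + 1) := by
          rw [hc_def]; field_simp
        rw [mul_one_div, div_le_div_iff₀ hjl (hrj_pos j)]
        have key : l * r (K + 1 + j) * (r (K + 1) - l)
            ≤ c * (r (K + 1) - l) * (r (K + 1 + j) - l) := by
          rw [hc_eq]
          nlinarith [mul_nonneg (mul_nonneg hl_pos.le hl_pos.le) (sub_nonneg.mpr hK1j)]
        nlinarith [key, hrK1_l]
      calc r (K + 1 + j) / (r (K + 1 + j) - l)
          = l / (r (K + 1 + j) - l) + 1 := h1
        _ ≤ Real.exp (l / (r (K + 1 + j) - l)) := Real.add_one_le_exp _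
        _ ≤ Real.exp (c * (1 / r (K + 1 + j))) := Real.exp_le_exp.mpr h2
    calc ∏ j ∈ Finset.range n, (r (K + 1 + j) / (r (K + 1 + j) - l))
        ≤ ∏ j ∈ Finset.range n, Real.exp (c * (1 / r (K + 1 + j))) := by
          refine Finset.prod_le_prod (fun j _ => ?_) hterm
          have hjl : 0 < r (K + 1 + j) - l := by have := hl_lt j; linarith
          exact div_nonneg (hrj_pos j).le hjl.le
      _ = Real.exp (∑ j ∈ Finset.range n, c * (1 / r (K + 1 + j))) := by
          rw [Real.exp_sum]
      _ ≤ C := by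
          rw [hC_def, Real.exp_le_exp, ← Finset.mul_sum, hB_def]
          refine mul_le_mul_of_nonneg_left ?_ hc_nonneg
          exact Summable.sum_le_tsum _ (fun j _ => one_div_nonneg.mpr (hrj_pos j).le) hsum'
  -- Chernoff bound for partial sums
  have hcher : ∀ (n : ℕ) (t : ℝ),
      (P {ω | t ≤ ∑ j ∈ Finset.range n, X j ω}).toReal ≤ Real.exp (-l * t) * C := by
    intro n t
    have hintsum : Integrable (fun ω => Real.exp (l * (∑ j ∈ Finset.range n, X j) ω)) P :=
      hindep.integrable_exp_mul_sum hXmeas (fun i _ => hint i)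
    have h := measure_ge_le_exp_mul_mgf (X := ∑ j ∈ Finset.range n, X j) (μ := P)
      t hl_pos.le hintsum
    have hset : {ω | t ≤ (∑ j ∈ Finset.range n, X j) ω}
        = {ω | t ≤ ∑ j ∈ Finset.range n, X j ω} := by
      ext ω; simp [Finset.sum_apply]
    rw [hset, hindep.mgf_sum hXmeas] at h
    refine h.trans ?_
    refine mul_le_mul_of_nonneg_left ?_ (Real.exp_pos _).le
    calc ∏ j ∈ Finset.range n, mgf (X j) P l
        = ∏ j ∈ Finset.range n, (r (K + 1 + j) / (r (K + 1 + j) - l)) := by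
          exact Finset.prod_congr rfl fun j _ => hmgf j
      _ ≤ C := hprod n
  -- a.e. nonnegativity
  have hnn : ∀ᵐ ω ∂P, ∀ j : ℕ, 0 ≤ X j ω := by
    rw [ae_all_iff]
    exact fun j => my_ae_nonneg P (hXmeas j) (hXlaw j)
  -- main tail bound
  have hmain : ∀ t : ℝ, 0 ≤ t →
      P {ω | ENNReal.ofReal t < ∑' j : ℕ, ENNReal.ofReal (X j ω)}
        ≤ ENNReal.ofReal (C * Real.exp (-l * t)) := by
    intro t ht
    set A : ℕ → Set Ω := fun n =>
      {ω | ENNReal.ofReal t < ∑ j ∈ Finset.range n, ENNReal.ofReal (X j ω)} with hA_def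
    have hmonoA : Monotone A := by
      intro n m hnm ω hω
      have hω' : ENNReal.ofReal t < ∑ j ∈ Finset.range n, ENNReal.ofReal (X j ω) := hω
      have : ENNReal.ofReal t < ∑ j ∈ Finset.range m, ENNReal.ofReal (X j ω) :=
        lt_of_lt_of_le hω' (Finset.sum_le_sum_of_subset (Finset.range_subset_range.mpr hnm))
      exact this
    have hUnion : {ω | ENNReal.ofReal t < ∑' j : ℕ, ENNReal.ofReal (X j ω)} = ⋃ n, A n := by
      ext ω
      simp only [mem_setOf_eq, mem_iUnion, hA_def, ENNReal.tsum_eq_iSup_nat, lt_iSup_iff]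
    rw [hUnion, (hmonoA.directed_le).measure_iUnion]
    refine iSup_le fun n => ?_
    have hsub : A n ≤ᵐ[P] {ω | t ≤ ∑ j ∈ Finset.range n, X j ω} := by
      filter_upwards [hnn] with ω hω hA
      have hA' : ENNReal.ofReal t < ∑ j ∈ Finset.range n, ENNReal.ofReal (X j ω) := hA
      rw [← ENNReal.ofReal_sum_of_nonneg (fun j _ => hω j),
        ENNReal.ofReal_lt_ofReal_iff_of_nonneg ht] at hA'
      show t ≤ ∑ j ∈ Finset.range n, X j ω
      exact hA'.le
    calc P (A n) ≤ P {ω | t ≤ ∑ j ∈ Finset.range n, X j ω} := measure_mono_ae hsub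
      _ = ENNReal.ofReal ((P {ω | t ≤ ∑ j ∈ Finset.range n, X j ω}).toReal) :=
          (ENNReal.ofReal_toReal (measure_ne_top _ _)).symm
      _ ≤ ENNReal.ofReal (C * Real.exp (-l * t)) := by
          refine ENNReal.ofReal_le_ofReal ?_
          calc (P {ω | t ≤ ∑ j ∈ Finset.range n, X j ω}).toReal
              ≤ Real.exp (-l * t) * C := hcher n t
            _ = C * Real.exp (-l * t) := mul_comm _ _
  refine ⟨⟨C, hC_nonneg, fun t ht => ?_⟩, ?_⟩
  · rw [show -((r K + r (K + 1)) / 2) * t = -l * t by rw [hl_def]]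
    exact hmain t ht
  -- the limit statement
  have hbound : ∀ t : ℝ, 0 ≤ t →
      (P {ω | ENNReal.ofReal t < ∑' j : ℕ, ENNReal.ofReal (X j ω)}).toReal
        ≤ C * Real.exp (-l * t) := by
    intro t ht
    refine ENNReal.toReal_le_of_le_ofReal ?_ (hmain t ht)
    positivity
  obtain ⟨d, hd_def⟩ : ∃ x : ℝ, x = (r (K + 1) - r K) / 2 := ⟨_, rfl⟩
  have hd_pos : 0 < d := by rw [hd_def]; linarith
  have hg : Tendsto (fun t : ℝ => C * Real.exp (-(d * t))) atTop (nhds 0) := by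
    have h1 : Tendsto (fun t : ℝ => d * t) atTop atTop :=
      Tendsto.const_mul_atTop hd_pos tendsto_id
    have h2 : Tendsto (fun t : ℝ => Real.exp (-(d * t))) atTop (nhds 0) :=
      Real.tendsto_exp_neg_atTop_nhds_zero.comp h1
    simpa using h2.const_mul C
  refine tendsto_of_tendsto_of_tendsto_of_le_of_le' tendsto_const_nhds hg ?_ ?_
  · filter_upwards with t
    exact div_nonneg ENNReal.toReal_nonneg (Real.exp_pos _).le
  · filter_upwards [eventually_ge_atTop (0:ℝ)] with t ht
    rw [div_le_iff₀ (Real.exp_pos _)]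
    have hexp : Real.exp (-l * t) = Real.exp (-(d * t)) * Real.exp (-(r K) * t) := by
      rw [← Real.exp_add]
      congr 1
      rw [hl_def, hd_def]
      ring
    calc (P {ω | ENNReal.ofReal t < ∑' j : ℕ, ENNReal.ofReal (X j ω)}).toReal
        ≤ C * Real.exp (-l * t) := hbound t ht
      _ = C * Real.exp (-(d * t)) * Real.exp (-(r K) * t) := by rw [hexp, mul_assoc]
end

section
/- Fix α with 1 < α < 2 and define r_j = ∫_0^1 (1 - (1-x)^j - j x (1-x)^{j-1}) x^{-1-α}(1-x)^{α-1} dx for integers j ≥ 1. Then r_j / ( Γ(2-α) j^{α} / α ) → 1 as j → ∞, where Γ denotes the real Gamma function; moreover r_j > 0 for every j ≥ 2 and Σ_{j ≥ 2} 1/r_j < ∞. -/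
open MeasureTheory Set Filter Real

open Topology
open scoped Nat

/-- Pointwise identity: complex Beta integrand equals the cast of the real one on `(0,1)`. -/
private lemma realBeta_eqOn {u v : ℝ} :
    ∀ x ∈ Ioo (0:ℝ) 1,
      (x:ℂ) ^ ((u:ℂ) - 1) * (1 - (x:ℂ)) ^ ((v:ℂ) - 1)
        = ((x ^ (u - 1) * (1 - x) ^ (v - 1) : ℝ) : ℂ) := by
  intro x hx
  have hx1 : (0:ℝ) ≤ 1 - x := by linarith [hx.2]
  rw [Complex.ofReal_mul, Complex.ofReal_cpow hx.1.le, Complex.ofReal_cpow hx1]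
  push_cast
  ring

private lemma realBeta_integrableOn {u v : ℝ} (hu : 0 < u) (hv : 0 < v) :
    IntegrableOn (fun x : ℝ => x ^ (u - 1) * (1 - x) ^ (v - 1)) (Ioo 0 1) := by
  have h := Complex.betaIntegral_convergent (u := u) (v := v) (by simpa) (by simpa)
  rw [intervalIntegrable_iff_integrableOn_Ioo_of_le zero_le_one] at h
  refine MeasureTheory.IntegrableOn.congr_fun h.re (fun x hx => ?_) measurableSet_Ioo
  simp only [RCLike.re_to_complex]
  rw [realBeta_eqOn x hx, Complex.ofReal_re]

/-- The real Beta integral over `Ioo 0 1` in terms of the Gamma function. -/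
private lemma realBeta_integral {u v : ℝ} (hu : 0 < u) (hv : 0 < v) :
    ∫ x in Ioo (0:ℝ) 1, x ^ (u - 1) * (1 - x) ^ (v - 1)
      = Real.Gamma u * Real.Gamma v / Real.Gamma (u + v) := by
  have huv : 0 < Real.Gamma (u + v) := Real.Gamma_pos_of_pos (by linarith)
  have key : Complex.betaIntegral u v
      = ((∫ x in Ioo (0:ℝ) 1, x ^ (u - 1) * (1 - x) ^ (v - 1) : ℝ) : ℂ) := by
    rw [Complex.betaIntegral, intervalIntegral.integral_of_le zero_le_one,
      MeasureTheory.integral_Ioc_eq_integral_Ioo,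
      setIntegral_congr_fun measurableSet_Ioo fun x hx => realBeta_eqOn x hx]
    exact integral_ofReal
  have h := Complex.Gamma_mul_Gamma_eq_betaIntegral
    (s := u) (t := v) (by simpa) (by simpa)
  rw [key, ← Complex.ofReal_add, Complex.Gamma_ofReal, Complex.Gamma_ofReal,
    Complex.Gamma_ofReal, ← Complex.ofReal_mul, ← Complex.ofReal_mul,
    Complex.ofReal_inj] at h
  rw [h, mul_div_cancel_left₀ _ huv.ne']

private lemma Gamma_nat_add (s : ℝ) (hs : 0 < s) (n : ℕ) :
    Real.Gamma (s + n) = Real.Gamma s * ∏ j ∈ Finset.range n, (s + j) := by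
  induction n with
  | zero => simp
  | succ n ih =>
    have h1 : s + ((n + 1 : ℕ) : ℝ) = (s + n) + 1 := by push_cast; ring
    rw [h1, Real.Gamma_add_one (by positivity : (0:ℝ) < s + (n:ℝ)).ne', ih,
      Finset.prod_range_succ]
    ring

/-- `Γ(n + s) / (Γ(n) n^s) → 1` as `n → ∞`, from Euler's limit formula. -/
private lemma tendsto_Gamma_ratio {s : ℝ} (hs : 0 < s) :
    Tendsto (fun n : ℕ => Real.Gamma ((n:ℝ) + s) / (Real.Gamma n * (n:ℝ) ^ s)) atTop (𝓝 1) := by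
  have hG : 0 < Real.Gamma s := Real.Gamma_pos_of_pos hs
  have h1 : Tendsto (fun n : ℕ => (n:ℝ) / (s + n)) atTop (𝓝 1) := by
    have h0 : Tendsto (fun n : ℕ => s / (n:ℝ) + 1) atTop (𝓝 (0 + 1)) :=
      (tendsto_const_div_atTop_nhds_zero_nat s).add tendsto_const_nhds
    rw [zero_add] at h0
    have h2 := h0.inv₀ (by norm_num)
    rw [inv_one] at h2
    apply h2.congr'
    filter_upwards [eventually_gt_atTop 0] with n hn
    have hn' : (n:ℝ) ≠ 0 := Nat.cast_ne_zero.mpr hn.ne'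
    have hsn : s + (n:ℝ) ≠ 0 := by positivity
    field_simp
  have h3 : Tendsto (fun n : ℕ => Real.Gamma s * ((n:ℝ) / (s + n)) / Real.GammaSeq s n)
      atTop (𝓝 1) := by
    have := (tendsto_const_nhds (x := Real.Gamma s) (f := atTop (α := ℕ))).mul h1 |>.div
      (Real.GammaSeq_tendsto_Gamma s) hG.ne'
    rw [mul_one, div_self hG.ne'] at this
    exact this
  apply h3.congr'
  filter_upwards [eventually_ge_atTop 1] with n hn
  obtain ⟨m, rfl⟩ : ∃ m, n = m + 1 := ⟨n - 1, (Nat.succ_pred_eq_of_pos hn).symm⟩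
  have hncast : ((m + 1 : ℕ) : ℝ) = (m:ℝ) + 1 := by push_cast; ring
  have hnpos : (0:ℝ) < ((m + 1 : ℕ) : ℝ) := by positivity
  have hΓn : Real.Gamma ((m + 1 : ℕ) : ℝ) = (m ! : ℝ) := by
    rw [hncast]; exact_mod_cast Real.Gamma_nat_eq_factorial m
  have hΓns : Real.Gamma (((m + 1 : ℕ) : ℝ) + s)
      = Real.Gamma s * ∏ j ∈ Finset.range (m + 1), (s + j) := by
    rw [add_comm]; exact Gamma_nat_add s hs (m + 1)
  have hseq : Real.GammaSeq s (m + 1)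
      = ((m+1:ℕ):ℝ) ^ s * ((m+1) ! : ℝ) /
        ((∏ j ∈ Finset.range (m + 1), (s + j)) * (s + ((m+1:ℕ):ℝ))) := by
    rw [Real.GammaSeq, Finset.prod_range_succ]
  have hfact : ((m+1) ! : ℝ) = ((m+1:ℕ):ℝ) * (m ! : ℝ) := by
    rw [Nat.factorial_succ]; push_cast; ring
  have hprodpos : 0 < ∏ j ∈ Finset.range (m + 1), (s + (j:ℝ)) :=
    Finset.prod_pos fun j _ => by positivity
  have hpow : (0:ℝ) < ((m+1:ℕ):ℝ) ^ s := Real.rpow_pos_of_pos hnpos s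
  have hfct : (0:ℝ) < (m ! : ℝ) := by exact_mod_cast m.factorial_pos
  have hsn : (0:ℝ) < s + ((m+1:ℕ):ℝ) := by positivity
  rw [hΓn, hΓns, hseq, hfact]
  field_simp

/-- The pushing rates of the Beta coalescent with parameter `α`:
`r_j = ∫_0^1 (1-(1-x)^j - jx(1-x)^{j-1}) x^{-1-α}(1-x)^{α-1} dx`. -/
noncomputable def betaPushRate (α : ℝ) (j : ℕ) : ℝ :=
  ∫ x in Ioo (0 : ℝ) 1,
    (1 - (1 - x) ^ j - (j : ℝ) * x * (1 - x) ^ (j - 1)) * x ^ (-1 - α) * (1 - x) ^ (α - 1)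

private lemma push_pointwise (α : ℝ) (j : ℕ) (hj : 1 ≤ j) {x : ℝ} (hx : x ∈ Ioo (0:ℝ) 1) :
    (1 - (1 - x) ^ (j + 1) - ((j + 1 : ℕ) : ℝ) * x * (1 - x) ^ (j + 1 - 1)) *
        x ^ (-1 - α) * (1 - x) ^ (α - 1)
      = (1 - (1 - x) ^ j - (j : ℝ) * x * (1 - x) ^ (j - 1)) * x ^ (-1 - α) * (1 - x) ^ (α - 1)
        + (j : ℝ) * (x ^ (2 - α - 1) * (1 - x) ^ ((j : ℝ) - 1 + α - 1)) := by
  obtain ⟨hx0, hx1⟩ := hx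
  have hy : (0:ℝ) < 1 - x := by linarith
  obtain ⟨m, rfl⟩ : ∃ m, j = m + 1 := ⟨j - 1, (Nat.succ_pred_eq_of_pos hj).symm⟩
  have e1 : x ^ (2 - α - 1) = x ^ 2 * x ^ (-1 - α) := by
    rw [← Real.rpow_natCast x 2, ← Real.rpow_add hx0]
    congr 1
    push_cast
    ring
  have e2 : (1 - x) ^ (((m + 1 : ℕ) : ℝ) - 1 + α - 1) = (1 - x) ^ m * (1 - x) ^ (α - 1) := by
    rw [← Real.rpow_natCast (1 - x) m, ← Real.rpow_add hy]
    congr 1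
    push_cast
    ring
  simp only [Nat.add_sub_cancel]
  rw [e2, e1]
  push_cast
  simp only [pow_succ]
  ring

/-- Closed form: for `j ≥ 1`, the rate integrand is integrable and
`r_j = Γ(2-α) (j-1) Γ(j-1+α) / (α Γ(j))`. -/
private lemma betaPushRate_closed (α : ℝ) (hα1 : 1 < α) (hα2 : α < 2) (j : ℕ) (hj : 1 ≤ j) :
    IntegrableOn (fun x : ℝ =>
        (1 - (1 - x) ^ j - (j : ℝ) * x * (1 - x) ^ (j - 1)) * x ^ (-1 - α) * (1 - x) ^ (α - 1))
      (Ioo 0 1) ∧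
    betaPushRate α j
      = Real.Gamma (2 - α) * ((j:ℝ) - 1) * Real.Gamma ((j:ℝ) - 1 + α) / (α * Real.Gamma j) := by
  have hα0 : (0:ℝ) < α := by linarith
  have hu : (0:ℝ) < 2 - α := by linarith
  induction j, hj using Nat.le_induction with
  | base =>
    have hzero : (fun x : ℝ =>
        (1 - (1 - x) ^ 1 - ((1:ℕ) : ℝ) * x * (1 - x) ^ (1 - 1)) * x ^ (-1 - α) *
          (1 - x) ^ (α - 1)) = fun _ => (0:ℝ) := by
      funext x
      simp only [pow_one, Nat.sub_self, pow_zero, Nat.cast_one]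
      ring
    constructor
    · rw [hzero]
      exact integrableOn_zero
    · rw [betaPushRate, hzero]
      simp [Real.Gamma_one]
  | succ j hj ih =>
    have hj1 : (1:ℝ) ≤ (j:ℝ) := by exact_mod_cast hj
    have hv : (0:ℝ) < (j:ℝ) - 1 + α := by linarith
    have hΓj : 0 < Real.Gamma (j:ℝ) := Real.Gamma_pos_of_pos (by linarith)
    have hgint : IntegrableOn
        (fun x : ℝ => (j : ℝ) * (x ^ (2 - α - 1) * (1 - x) ^ ((j : ℝ) - 1 + α - 1)))
        (Ioo 0 1) := by
      have := (realBeta_integrableOn hu hv).const_mul (j:ℝ)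
      exact this
    have hEq : EqOn
        (fun x : ℝ => (1 - (1 - x) ^ (j + 1) - ((j + 1 : ℕ) : ℝ) * x * (1 - x) ^ (j + 1 - 1)) *
          x ^ (-1 - α) * (1 - x) ^ (α - 1))
        (fun x : ℝ =>
          (1 - (1 - x) ^ j - (j : ℝ) * x * (1 - x) ^ (j - 1)) * x ^ (-1 - α) * (1 - x) ^ (α - 1)
          + (j : ℝ) * (x ^ (2 - α - 1) * (1 - x) ^ ((j : ℝ) - 1 + α - 1))) (Ioo 0 1) :=
      fun x hx => push_pointwise α j hj hx
    have hint1 := ih.1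
    constructor
    · exact MeasureTheory.IntegrableOn.congr_fun (hint1.add hgint) hEq.symm measurableSet_Ioo
    · have hval : betaPushRate α (j + 1)
          = betaPushRate α j
            + (j : ℝ) * (Real.Gamma (2 - α) * Real.Gamma ((j:ℝ) - 1 + α) /
                Real.Gamma ((j:ℝ) + 1)) := by
        rw [betaPushRate, setIntegral_congr_fun measurableSet_Ioo hEq,
          integral_add hint1 hgint, MeasureTheory.integral_const_mul, realBeta_integral hu hv]
        rw [show 2 - α + ((j:ℝ) - 1 + α) = (j:ℝ) + 1 by ring]
        rfl
      rw [hval, ih.2]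
      have hG1 : Real.Gamma ((j:ℝ) + 1) = (j:ℝ) * Real.Gamma (j:ℝ) :=
        Real.Gamma_add_one (by positivity : (0:ℝ) < (j:ℝ)).ne'
      have hG2 : Real.Gamma (((j+1:ℕ):ℝ) - 1 + α)
          = ((j:ℝ) - 1 + α) * Real.Gamma ((j:ℝ) - 1 + α) := by
        rw [show ((j+1:ℕ):ℝ) - 1 + α = ((j:ℝ) - 1 + α) + 1 by push_cast; ring,
          Real.Gamma_add_one hv.ne']
      rw [hG2, show ((j+1:ℕ):ℝ) = (j:ℝ) + 1 by push_cast; ring, hG1]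
      field_simp
      ring

/-- For `1 < α < 2`, the Beta coalescent pushing rates satisfy `r_j ~ Γ(2-α) j^α / α` as
`j → ∞`; moreover `r_j > 0` for `j ≥ 2` and `Σ_{j ≥ 2} 1/r_j < ∞`. -/
theorem betaPushRate_asymptotic_and_summable (α : ℝ) (hα1 : 1 < α) (hα2 : α < 2) :
    Tendsto
      (fun j : ℕ => betaPushRate α j / (Real.Gamma (2 - α) * (j : ℝ) ^ α / α))
      atTop (nhds 1) ∧
    (∀ j : ℕ, 2 ≤ j → 0 < betaPushRate α j) ∧
    Summable (fun j : ℕ => 1 / betaPushRate α (j + 2)) := by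
  have hα0 : (0:ℝ) < α := by linarith
  have hΓ2 : 0 < Real.Gamma (2 - α) := Real.Gamma_pos_of_pos (by linarith)
  have hcf : ∀ j : ℕ, 1 ≤ j → betaPushRate α j
      = Real.Gamma (2 - α) * ((j:ℝ) - 1) * Real.Gamma ((j:ℝ) - 1 + α) / (α * Real.Gamma j) :=
    fun j hj => (betaPushRate_closed α hα1 hα2 j hj).2
  -- the limit statement
  have hT : Tendsto (fun j : ℕ => betaPushRate α j / (Real.Gamma (2 - α) * (j : ℝ) ^ α / α))
      atTop (𝓝 1) := by
    have hA := tendsto_Gamma_ratio hα0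
    have hcomp : Tendsto ((fun n : ℕ => Real.Gamma ((n:ℝ) + α) / (Real.Gamma n * (n:ℝ) ^ α)) ∘
        (fun j : ℕ => j - 1)) atTop (𝓝 1) := hA.comp (tendsto_sub_atTop_nat 1)
    have hq : Tendsto (fun j : ℕ => (((j-1:ℕ):ℝ) / (j:ℝ)) ^ α) atTop (𝓝 1) := by
      have hb : Tendsto (fun j : ℕ => ((j-1:ℕ):ℝ) / (j:ℝ)) atTop (𝓝 1) := by
        have h0 : Tendsto (fun j : ℕ => 1 - 1/(j:ℝ)) atTop (𝓝 (1 - 0)) :=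
          tendsto_const_nhds.sub tendsto_one_div_atTop_nhds_zero_nat
        rw [sub_zero] at h0
        apply h0.congr'
        filter_upwards [eventually_ge_atTop 1] with j hj
        have hj0 : (j:ℝ) ≠ 0 := Nat.cast_ne_zero.mpr (by omega)
        rw [Nat.cast_sub hj]
        push_cast
        field_simp
      have := hb.rpow_const (Or.inr hα0.le)
      simpa using this
    have hmul := hcomp.mul hq
    rw [mul_one] at hmul
    apply hmul.congr'
    filter_upwards [eventually_ge_atTop 2] with j hj
    obtain ⟨n, rfl⟩ : ∃ n, j = n + 1 := ⟨j - 1, by omega⟩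
    have hn1 : 1 ≤ n := by omega
    simp only [Function.comp_apply, Nat.add_sub_cancel]
    rw [hcf (n+1) (by omega)]
    have hn1' : (1:ℝ) ≤ (n:ℝ) := by exact_mod_cast hn1
    have hnpos : (0:ℝ) < (n:ℝ) := by linarith
    have hΓn : 0 < Real.Gamma (n:ℝ) := Real.Gamma_pos_of_pos hnpos
    have hΓn1 : Real.Gamma ((n+1:ℕ):ℝ) = (n:ℝ) * Real.Gamma (n:ℝ) := by
      rw [show ((n+1:ℕ):ℝ) = (n:ℝ)+1 by push_cast; ring, Real.Gamma_add_one hnpos.ne']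
    have hc1 : ((n+1:ℕ):ℝ) - 1 = (n:ℝ) := by push_cast; ring
    rw [hc1, hΓn1]
    have hnp1 : (0:ℝ) < ((n+1:ℕ):ℝ) := by positivity
    have hdiv : ((n:ℝ) / ((n+1:ℕ):ℝ)) ^ α = (n:ℝ) ^ α / ((n+1:ℕ):ℝ) ^ α :=
      Real.div_rpow hnpos.le hnp1.le α
    rw [hdiv]
    have hnα : (0:ℝ) < (n:ℝ) ^ α := Real.rpow_pos_of_pos hnpos _
    have hn1α : (0:ℝ) < ((n+1:ℕ):ℝ) ^ α := Real.rpow_pos_of_pos hnp1 _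
    field_simp
  have hpos : ∀ j : ℕ, 2 ≤ j → 0 < betaPushRate α j := by
    intro j hj
    rw [hcf j (by omega)]
    have h2 : (2:ℝ) ≤ (j:ℝ) := by exact_mod_cast hj
    have hΓj : 0 < Real.Gamma (j:ℝ) := Real.Gamma_pos_of_pos (by linarith)
    have hΓjα : 0 < Real.Gamma ((j:ℝ) - 1 + α) := Real.Gamma_pos_of_pos (by linarith)
    exact div_pos (mul_pos (mul_pos hΓ2 (by linarith)) hΓjα) (mul_pos hα0 hΓj)
  refine ⟨hT, hpos, ?_⟩
  -- summability
  have hbound : ∀ᶠ j : ℕ in atTop,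
      (1:ℝ)/2 ≤ betaPushRate α j / (Real.Gamma (2 - α) * (j:ℝ) ^ α / α) :=
    hT.eventually (eventually_ge_nhds (by norm_num : (1:ℝ)/2 < 1))
  have hbound2 : ∀ᶠ j : ℕ in atTop,
      (1:ℝ)/2 ≤ betaPushRate α (j+2) / (Real.Gamma (2 - α) * ((j+2:ℕ):ℝ) ^ α / α) :=
    (tendsto_add_atTop_nat 2).eventually hbound
  have hsum0 : Summable (fun j : ℕ => ((j:ℝ) ^ α)⁻¹) := Real.summable_nat_rpow_inv.mpr hα1
  refine summable_of_isBigO_nat hsum0 ?_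
  rw [Asymptotics.isBigO_iff]
  refine ⟨2 * α / Real.Gamma (2 - α), ?_⟩
  filter_upwards [hbound2, eventually_ge_atTop 1] with j hj2 hj1
  have hj1' : (1:ℝ) ≤ (j:ℝ) := by exact_mod_cast hj1
  have hjpos : (0:ℝ) < (j:ℝ) := by linarith
  have hj2pos : (0:ℝ) < ((j+2:ℕ):ℝ) := by positivity
  have hpowj : (0:ℝ) < (j:ℝ) ^ α := Real.rpow_pos_of_pos hjpos _
  have hpowj2 : (0:ℝ) < ((j+2:ℕ):ℝ) ^ α := Real.rpow_pos_of_pos hj2pos _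
  have hc : (0:ℝ) < Real.Gamma (2 - α) * ((j+2:ℕ):ℝ) ^ α / α := by positivity
  have h12 : 1/2 * (Real.Gamma (2 - α) * ((j+2:ℕ):ℝ) ^ α / α) ≤ betaPushRate α (j+2) :=
    (le_div_iff₀ hc).mp hj2
  have hrpos : 0 < betaPushRate α (j+2) := lt_of_lt_of_le (by positivity) h12
  rw [Real.norm_eq_abs, Real.norm_eq_abs,
    abs_of_nonneg (by positivity : (0:ℝ) ≤ 1 / betaPushRate α (j+2)),
    abs_of_nonneg (by positivity : (0:ℝ) ≤ ((j:ℝ) ^ α)⁻¹)]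
  have step1 : 1 / betaPushRate α (j+2)
      ≤ 1 / (1/2 * (Real.Gamma (2 - α) * ((j+2:ℕ):ℝ) ^ α / α)) :=
    one_div_le_one_div_of_le (by positivity) h12
  have e : 1 / (1/2 * (Real.Gamma (2 - α) * ((j+2:ℕ):ℝ) ^ α / α))
      = 2 * α / Real.Gamma (2 - α) * (((j+2:ℕ):ℝ) ^ α)⁻¹ := by
    field_simp
  rw [e] at step1
  refine step1.trans (mul_le_mul_of_nonneg_left ?_ (by positivity))
  have hmono : (j:ℝ) ^ α ≤ ((j+2:ℕ):ℝ) ^ α :=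
    Real.rpow_le_rpow hjpos.le (by push_cast; linarith) hα0.le
  exact inv_anti₀ hpowj hmono
end

section
/- Let (Ω, 𝔽, ℙ) be a probability space, T a nonnegative real-valued random variable exponentially distributed with rate r > 0 (law with density u ↦ r e^{-ru} 1_{u ≥ 0}), and let 0 < λ < r. Then e^{λT} is integrable and E[e^{λT}] = r/(r-λ); moreover for any sequence (T_j)_{j ≥ 1} of independent random variables with T_j exponentially distributed with rate r_j, and any λ with 0 < λ < inf_j r_j and Σ_j 1/(r_j - λ) < ∞, the random variable exp(λ Σ_j T_j) is integrable with E[ exp( λ Σ_{j ≥ 1} T_j ) ] = Π_{j ≥ 1} r_j/(r_j - λ), and this infinite product is finite, bounded by exp( λ Σ_{j ≥ 1} 1/(r_j - λ) ). -/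
open MeasureTheory ProbabilityTheory Filter Topology
open scoped ENNReal NNReal

lemma exp_mgf_lintegral {r lam : ℝ} (hr : 0 < r) (hlam : lam < r) :
    ∫⁻ x, ENNReal.ofReal (Real.exp (lam * x)) ∂(expMeasure r)
      = ENNReal.ofReal (r / (r - lam)) := by
  have hrl : 0 < r - lam := by linarith
  have hpdf : Measurable (exponentialPDF r) :=
    (measurable_exponentialPDFReal r).ennreal_ofReal
  have hmeas : Measurable fun x : ℝ => ENNReal.ofReal (Real.exp (lam * x)) :=
    ((measurable_id.const_mul lam).exp).ennreal_ofReal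
  rw [show expMeasure r = MeasureTheory.volume.withDensity (exponentialPDF r) from rfl,
    lintegral_withDensity_eq_lintegral_mul _ hpdf hmeas]
  have hptw : (fun x => exponentialPDF r x * ENNReal.ofReal (Real.exp (lam * x)))
      = fun x => ENNReal.ofReal (r / (r - lam)) * exponentialPDF (r - lam) x := by
    funext x
    rcases lt_or_ge x 0 with hx | hx
    · rw [exponentialPDF_of_neg hx, exponentialPDF_of_neg hx, zero_mul, mul_zero]
    · rw [exponentialPDF_of_nonneg hx, exponentialPDF_of_nonneg hx,
        ← ENNReal.ofReal_mul (by positivity), ← ENNReal.ofReal_mul (by positivity)]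
      congr 1
      rw [mul_assoc, ← Real.exp_add]
      have h1 : -(r * x) + lam * x = -((r - lam) * x) := by ring
      rw [h1]
      field_simp
  simp only [Pi.mul_apply]
  rw [hptw, lintegral_const_mul _ (show Measurable (exponentialPDF (r - lam)) from
      (measurable_exponentialPDFReal _).ennreal_ofReal),
    lintegral_exponentialPDF_eq_one hrl, mul_one]

lemma exp_mgf_aux {Ω : Type*} [MeasurableSpace Ω] (P : Measure Ω) [IsProbabilityMeasure P]
    (T : Ω → ℝ) (r : ℝ) (hr : 0 < r) (hTmeas : Measurable T)
    (hTlaw : Measure.map T P = expMeasure r) (lam : ℝ) (hlamr : lam < r) :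
    Integrable (fun ω => Real.exp (lam * T ω)) P ∧
      ∫ ω, Real.exp (lam * T ω) ∂P = r / (r - lam) := by
  have hrl : 0 < r - lam := by linarith
  have hmeas : Measurable fun x : ℝ => ENNReal.ofReal (Real.exp (lam * x)) :=
    ((measurable_id.const_mul lam).exp).ennreal_ofReal
  have key : ∫⁻ ω, ENNReal.ofReal (Real.exp (lam * T ω)) ∂P = ENNReal.ofReal (r / (r - lam)) := by
    have := lintegral_map hmeas hTmeas (μ := P)
    rw [hTlaw] at this
    rw [← this, exp_mgf_lintegral hr hlamr]
  have hnn : 0 ≤ᵐ[P] fun ω => Real.exp (lam * T ω) :=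
    Filter.Eventually.of_forall fun ω => (Real.exp_pos _).le
  have hint : Integrable (fun ω => Real.exp (lam * T ω)) P := by
    refine ⟨((hTmeas.const_mul lam).exp).aestronglyMeasurable, ?_⟩
    rw [hasFiniteIntegral_iff_ofReal hnn, key]
    exact ENNReal.ofReal_lt_top
  refine ⟨hint, ?_⟩
  rw [integral_eq_lintegral_of_nonneg_ae hnn hint.1, key,
    ENNReal.toReal_ofReal (by positivity)]


/-- Moment generating function computations for exponential random variables:
if `T` is exponential with rate `r > 0` and `0 < λ < r`, then `E[e^{λT}] = r/(r-λ)`; moreover for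
independent exponentials `(T_j)` with rates `r_j`, `0 < λ < inf_j r_j` and
`Σ_j 1/(r_j - λ) < ∞`, one has `E[exp(λ Σ_j T_j)] = Π_j r_j/(r_j-λ)`, the infinite product being
finite and bounded by `exp(λ Σ_j 1/(r_j-λ))`. -/
theorem exponential_mgf_and_product
    {Ω : Type*} [MeasurableSpace Ω] (P : Measure Ω) [IsProbabilityMeasure P]
    (T : Ω → ℝ) (hTnn : ∀ ω, 0 ≤ T ω) (r : ℝ) (hr : 0 < r)
    (hTmeas : Measurable T) (hTlaw : Measure.map T P = expMeasure r)
    (lam : ℝ) (hlam0 : 0 < lam) (hlamr : lam < r) :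
    (Integrable (fun ω => Real.exp (lam * T ω)) P ∧
      ∫ ω, Real.exp (lam * T ω) ∂P = r / (r - lam)) ∧
    ∀ (Ts : ℕ → Ω → ℝ) (rs : ℕ → ℝ) (lam' : ℝ),
      (∀ j, Measurable (Ts j)) →
      iIndepFun Ts P →
      (∀ j, 0 < rs j) →
      (∀ j, Measure.map (Ts j) P = expMeasure (rs j)) →
      0 < lam' → lam' < ⨅ j, rs j →
      Summable (fun j : ℕ => 1 / (rs j - lam')) →
      (Integrable (fun ω => Real.exp (lam' * ∑' j : ℕ, Ts j ω)) P ∧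
        ∫ ω, Real.exp (lam' * ∑' j : ℕ, Ts j ω) ∂P = ∏' j : ℕ, rs j / (rs j - lam') ∧
        Multipliable (fun j : ℕ => rs j / (rs j - lam')) ∧
        ∏' j : ℕ, rs j / (rs j - lam')
          ≤ Real.exp (lam' * ∑' j : ℕ, 1 / (rs j - lam'))) := by
  refine ⟨exp_mgf_aux P T r hr hTmeas hTlaw lam hlamr, ?_⟩
  intro Ts rs lam' hmeasT hindep hrs hlaw hlam'0 hlam'inf hsum
  have hbdd : BddBelow (Set.range rs) := ⟨0, by rintro y ⟨j, rfl⟩; exact (hrs j).le⟩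
  have hlt : ∀ j, lam' < rs j := fun j => lt_of_lt_of_le hlam'inf (ciInf_le hbdd j)
  have hpos : ∀ j, 0 < rs j - lam' := fun j => sub_pos.2 (hlt j)
  have haux := fun j => exp_mgf_aux P (Ts j) (rs j) (hrs j) (hmeasT j) (hlaw j) lam' (hlt j)
  set f : ℕ → ℝ := fun j => rs j / (rs j - lam') with hf
  set B : ℝ := Real.exp (lam' * ∑' j, 1 / (rs j - lam')) with hB
  have hf1 : ∀ j, 1 ≤ f j := fun j => (one_le_div (hpos j)).2 (by linarith [hlam'0])
  have hfnn : ∀ j, 0 ≤ f j := fun j => zero_le_one.trans (hf1 j)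
  have hfe : ∀ j, f j ≤ Real.exp (lam' * (1 / (rs j - lam'))) := by
    intro j
    have h1 : f j = 1 + lam' * (1 / (rs j - lam')) := by
      have hne : rs j - lam' ≠ 0 := (hpos j).ne'
      rw [hf]; field_simp; ring
    rw [h1]
    have := Real.add_one_le_exp (lam' * (1 / (rs j - lam')))
    linarith
  have hprodB : ∀ s : Finset ℕ, ∏ j ∈ s, f j ≤ B := by
    intro s
    calc ∏ j ∈ s, f j ≤ ∏ j ∈ s, Real.exp (lam' * (1 / (rs j - lam'))) :=
          Finset.prod_le_prod (fun j _ => hfnn j) (fun j _ => hfe j)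
      _ = Real.exp (∑ j ∈ s, lam' * (1 / (rs j - lam'))) := (Real.exp_sum s _).symm
      _ ≤ B := by
          rw [hB]
          apply Real.exp_le_exp.2
          rw [← Finset.mul_sum]
          exact mul_le_mul_of_nonneg_left
            (Summable.sum_le_tsum s (fun j _ => (one_div_pos.2 (hpos j)).le) hsum) hlam'0.le
  have hBnn : 0 ≤ B := (Real.exp_pos _).le
  -- Multipliability via ℝ≥0
  set g : ℕ → ℝ≥0 := fun j => (f j).toNNReal with hg
  have hgcoe : ∀ j, (g j : ℝ) = f j := fun j => Real.coe_toNNReal _ (hfnn j)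
  have hg1 : ∀ j, 1 ≤ g j := fun j => by
    rw [← NNReal.coe_le_coe, hgcoe, NNReal.coe_one]; exact hf1 j
  have hSne : (Set.range fun s : Finset ℕ => ∏ j ∈ s, g j).Nonempty := ⟨_, ⟨∅, rfl⟩⟩
  have hSbdd : BddAbove (Set.range fun s : Finset ℕ => ∏ j ∈ s, g j) := by
    refine ⟨B.toNNReal, ?_⟩
    rintro x ⟨s, rfl⟩
    rw [← NNReal.coe_le_coe, NNReal.coe_prod, Real.coe_toNNReal _ hBnn]
    simp_rw [hgcoe]
    exact hprodB s
  have hgHasProd : HasProd g (sSup (Set.range fun s : Finset ℕ => ∏ j ∈ s, g j)) :=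
    hasProd_of_isLUB_of_one_le _ hg1 (isLUB_csSup hSne hSbdd)
  have hM : Multipliable f := by
    have h2 := hgHasProd.map NNReal.toRealHom.toMonoidHom NNReal.continuous_coe
    have h3 : HasProd f (((sSup (Set.range fun s : Finset ℕ => ∏ j ∈ s, g j)) : ℝ≥0) : ℝ) := by
      convert h2 using 1
      funext j
      exact (hgcoe j).symm
      rfl
    exact h3.multipliable
  set L : ℝ := ∏' j, f j with hL
  set p : ℕ → ℝ := fun n => ∏ j ∈ Finset.range n, f j with hp
  have hptend : Tendsto p atTop (𝓝 L) := hM.hasProd.tendsto_prod_nat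
  have hpmono : Monotone p := monotone_nat_of_le_succ fun n => by
    rw [hp]
    simp only
    rw [Finset.prod_range_succ]
    exact le_mul_of_one_le_right (Finset.prod_nonneg fun j _ => hfnn j) (hf1 n)
  have hLB : L ≤ B := le_of_tendsto' hptend fun n => hprodB _
  have h1L : (1 : ℝ) ≤ L := by
    have h0 := hpmono.ge_of_tendsto hptend 0
    simpa [hp] using h0
  have hLnn : 0 ≤ L := zero_le_one.trans h1L
  -- a.e. nonnegativity
  have hae0 : ∀ j, ∀ᵐ ω ∂P, 0 ≤ Ts j ω := by
    intro j
    rw [ae_iff]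
    have hpre : {ω | ¬0 ≤ Ts j ω} = Ts j ⁻¹' Set.Iio 0 := by ext ω; simp [not_le]
    rw [hpre, ← Measure.map_apply (hmeasT j) measurableSet_Iio, hlaw j,
      show expMeasure (rs j) = MeasureTheory.volume.withDensity (exponentialPDF (rs j)) from rfl,
      withDensity_apply _ measurableSet_Iio]
    exact lintegral_exponentialPDF_of_nonpos le_rfl
  have hA : ∀ᵐ ω ∂P, ∀ j, 0 ≤ Ts j ω := ae_all_iff.2 hae0
  -- partial sums
  set S : ℕ → Ω → ℝ := fun n ω => ∑ j ∈ Finset.range n, Ts j ω with hS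
  have hSfun : ∀ n, (fun ω => Real.exp (lam' * S n ω))
      = fun ω => Real.exp (lam' * (∑ j ∈ Finset.range n, Ts j) ω) := by
    intro n; funext ω; simp [hS, Finset.sum_apply]
  have hSint : ∀ n, Integrable (fun ω => Real.exp (lam' * S n ω)) P := fun n => by
    rw [hSfun n]
    exact hindep.integrable_exp_mul_sum hmeasT (fun i _ => (haux i).1)
  have hSval : ∀ n, ∫ ω, Real.exp (lam' * S n ω) ∂P = p n := by
    intro n
    have h1 : ∫ ω, Real.exp (lam' * S n ω) ∂P = mgf (∑ j ∈ Finset.range n, Ts j) P lam' := by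
      rw [hSfun n]; rfl
    rw [h1, hindep.mgf_sum hmeasT (Finset.range n)]
    refine Finset.prod_congr rfl fun j _ => ?_
    rw [mgf]
    exact (haux j).2
  set G : ℕ → Ω → ℝ≥0∞ := fun n ω => ENNReal.ofReal (Real.exp (lam' * S n ω)) with hG
  have hSmeas : ∀ n, Measurable (S n) := fun n =>
    Finset.measurable_sum _ fun j _ => hmeasT j
  have hGmeas : ∀ n, Measurable (G n) := fun n =>
    (((hSmeas n).const_mul lam').exp).ennreal_ofReal
  have hGval : ∀ n, ∫⁻ ω, G n ω ∂P = ENNReal.ofReal (p n) := fun n => by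
    rw [hG]
    simp only
    rw [← ofReal_integral_eq_lintegral_ofReal (hSint n)
      (Filter.Eventually.of_forall fun ω => (Real.exp_pos _).le), hSval n]
  have hGmono : ∀ᵐ ω ∂P, Monotone fun n => G n ω := by
    filter_upwards [hA] with ω hω
    have hSmono : Monotone fun n => S n ω := monotone_nat_of_le_succ fun n => by
      simp only [hS, Finset.sum_range_succ]
      linarith [hω n]
    intro m n hmn
    exact ENNReal.ofReal_le_ofReal (Real.exp_le_exp.2
      (mul_le_mul_of_nonneg_left (hSmono hmn) hlam'0.le))
  have hMCT : ∫⁻ ω, ⨆ n, G n ω ∂P = ⨆ n, ∫⁻ ω, G n ω ∂P :=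
    lintegral_iSup' (fun n => (hGmeas n).aemeasurable) hGmono
  have hsupP : (⨆ n, ENNReal.ofReal (p n)) = ENNReal.ofReal L := by
    have hmono : Monotone fun n => ENNReal.ofReal (p n) :=
      fun m n h => ENNReal.ofReal_le_ofReal (hpmono h)
    exact tendsto_nhds_unique (tendsto_atTop_iSup hmono)
      ((ENNReal.continuous_ofReal.tendsto _).comp hptend)
  have hfin : ∫⁻ ω, ⨆ n, G n ω ∂P = ENNReal.ofReal L := by
    rw [hMCT]
    simp_rw [hGval]
    exact hsupP
  have hae_fin : ∀ᵐ ω ∂P, (⨆ n, G n ω) < ∞ :=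
    ae_lt_top (Measurable.iSup hGmeas) (by rw [hfin]; exact ENNReal.ofReal_ne_top)
  have hkey : ∀ᵐ ω ∂P, (⨆ n, G n ω) = ENNReal.ofReal (Real.exp (lam' * ∑' j, Ts j ω)) ∧
      Tendsto (fun n => Real.exp (lam' * S n ω)) atTop
        (𝓝 (Real.exp (lam' * ∑' j, Ts j ω))) := by
    filter_upwards [hA, hae_fin] with ω hω hfinω
    have hcpos : 0 < (⨆ n, G n ω).toReal := by
      have h1 : G 0 ω ≤ ⨆ n, G n ω := le_iSup (fun n => G n ω) 0
      have h2 := ENNReal.toReal_mono hfinω.ne h1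
      have h3 : (G 0 ω).toReal = Real.exp (lam' * S 0 ω) :=
        ENNReal.toReal_ofReal (Real.exp_pos _).le
      rw [h3] at h2
      exact lt_of_lt_of_le (Real.exp_pos _) h2
    have hble : ∀ n, Real.exp (lam' * S n ω) ≤ (⨆ n, G n ω).toReal := fun n => by
      have h1 : G n ω ≤ ⨆ n, G n ω := le_iSup (fun n => G n ω) n
      have h2 := ENNReal.toReal_mono hfinω.ne h1
      rwa [ENNReal.toReal_ofReal (Real.exp_pos _).le] at h2
    have hSb : ∀ n, ∑ j ∈ Finset.range n, Ts j ω
        ≤ Real.log (⨆ n, G n ω).toReal / lam' := fun n => by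
      rw [le_div_iff₀ hlam'0]
      rw [mul_comm]
      exact (Real.le_log_iff_exp_le hcpos).2 (hble n)
    have hsummω : Summable fun j => Ts j ω := summable_of_sum_range_le hω hSb
    have hTend : Tendsto (fun n => S n ω) atTop (𝓝 (∑' j, Ts j ω)) :=
      hsummω.hasSum.tendsto_sum_nat
    have hTende : Tendsto (fun n => Real.exp (lam' * S n ω)) atTop
        (𝓝 (Real.exp (lam' * ∑' j, Ts j ω))) :=
      (Real.continuous_exp.tendsto _).comp (hTend.const_mul lam')
    refine ⟨?_, hTende⟩
    have hSmono : Monotone fun n => S n ω := monotone_nat_of_le_succ fun n => by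
      simp only [hS, Finset.sum_range_succ]
      linarith [hω n]
    have hmonoG : Monotone fun n => G n ω := fun m n hmn =>
      ENNReal.ofReal_le_ofReal (Real.exp_le_exp.2
        (mul_le_mul_of_nonneg_left (hSmono hmn) hlam'0.le))
    exact tendsto_nhds_unique (tendsto_atTop_iSup hmonoG)
      ((ENNReal.continuous_ofReal.tendsto _).comp hTende)
  have hT : ∫⁻ ω, ENNReal.ofReal (Real.exp (lam' * ∑' j, Ts j ω)) ∂P = ENNReal.ofReal L := by
    rw [← hfin]
    exact lintegral_congr_ae (hkey.mono fun ω h => h.1.symm)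
  have hasm : AEStronglyMeasurable (fun ω => Real.exp (lam' * ∑' j, Ts j ω)) P := by
    have hm : ∀ n, AEMeasurable (fun ω => Real.exp (lam' * S n ω)) P := fun n =>
      (((hSmeas n).const_mul lam').exp).aemeasurable
    exact (aemeasurable_of_tendsto_metrizable_ae' hm
      (hkey.mono fun ω h => h.2)).aestronglyMeasurable
  have hnn2 : 0 ≤ᵐ[P] fun ω => Real.exp (lam' * ∑' j, Ts j ω) :=
    Filter.Eventually.of_forall fun ω => (Real.exp_pos _).le
  have hint : Integrable (fun ω => Real.exp (lam' * ∑' j, Ts j ω)) P :=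
    ⟨hasm, by rw [hasFiniteIntegral_iff_ofReal hnn2, hT]; exact ENNReal.ofReal_lt_top⟩
  refine ⟨hint, ?_, hM, hLB⟩
  rw [integral_eq_lintegral_of_nonneg_ae hnn2 hasm, hT, ENNReal.toReal_ofReal hLnn]
end
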